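/- arXiv:2402.18921 — 2 statements merged into one kernel-verified Lean document; each statement's English description precedes it below -/
import Mathlib

section
/- Let A = ℓ(Y₁,Y₂) − θℓ₁(Y₁,X₂) − θℓ₁(X₁,Y₂) + θ²ℓ₂(X₁,X₂), where θ ∈ [0,1], ℓ₁(y₁,x₂) = E[ℓ(y₁,Y₂)|X₂=x₂], ℓ₂(x₁,x₂) = E[ℓ(Y₁,Y₂)|X₁,X₂], and (X₁,Y₁),(X₂,Y₂) are i.i.d. with square-integrable ℓ. Then Var(A) = Var(ℓ(Y₁,Y₂)) − 2θ(2−θ)·Var(ℓ₁(Y₁,X₂)) + θ²(2−θ)²·Var(ℓ₂(X₁,X₂)). -/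
open MeasureTheory ProbabilityTheory

section Aux

variable {α : Type*} [MeasurableSpace α] {μ : Measure α}

lemma aux_int_mul {f g : α → ℝ} (hf : MemLp f 2 μ) (hg : MemLp g 2 μ) :
    Integrable (fun x => f x * g x) μ := by
  have h := (((hf.add hg).integrable_sq).sub hf.integrable_sq).sub hg.integrable_sq
  refine (h.div_const 2).congr (Filter.Eventually.of_forall fun x => ?_)
  simp only [Pi.sub_apply, Pi.add_apply]
  ring

lemma aux_meas_comap {δ γ β : Type*} [MeasurableSpace δ] [MeasurableSpace γ] [MeasurableSpace β]
    (r : δ → γ) {φ : γ → β} (hφ : Measurable φ) :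
    Measurable[MeasurableSpace.comap r inferInstance] fun x => φ (r x) :=
  fun s hs => ⟨φ ⁻¹' s, hφ hs, rfl⟩

lemma aux_slice {ι : Type*} [MeasurableSpace ι] {ν : Measure α}
    [IsProbabilityMeasure ν] {D₀ : ι × α → ℝ} (hD₀ : StronglyMeasurable D₀)
    {j : α → ι} (hj : Measurable j)
    (hDint : Integrable (fun w : α × α => D₀ (j w.1, w.2)) (ν.prod ν))
    {v : Set α} (hv : MeasurableSet v)
    (hzero : ∀ b : Set ι, MeasurableSet b →
      ∫ w in (j ⁻¹' b) ×ˢ v, D₀ (j w.1, w.2) ∂(ν.prod ν) = 0)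
    {u : Set α} (hu : MeasurableSet u) :
    ∫ w in u ×ˢ v, D₀ (j w.1, w.2) ∂(ν.prod ν) = 0 := by
  haveI : IsProbabilityMeasure (ν.map j) := Measure.isProbabilityMeasure_map hj.aemeasurable
  set g : ι → ℝ := fun i => ∫ w₂, D₀ (i, w₂) ∂(ν.restrict v) with hg
  have hgm : StronglyMeasurable g := hD₀.integral_prod_right'
  have fub : ∀ s : Set α, MeasurableSet s →
      ∫ w in s ×ˢ v, D₀ (j w.1, w.2) ∂(ν.prod ν) = ∫ w₁ in s, g (j w₁) ∂ν := by
    intro s hs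
    rw [← Measure.prod_restrict]
    rw [integral_prod _ (by rw [Measure.prod_restrict]; exact hDint.integrableOn)]
  have key : ∀ b : Set ι, MeasurableSet b → ∫ i in b, g i ∂(ν.map j) = 0 := by
    intro b hb
    rw [setIntegral_map hb hgm.aestronglyMeasurable hj.aemeasurable, ← fub _ (hj hb)]
    exact hzero b hb
  have hgint : Integrable (fun w₁ => g (j w₁)) ν := by
    have h1 : Integrable (fun w : α × α => D₀ (j w.1, w.2)) (ν.prod (ν.restrict v)) := by
      have h2 : ν.prod (ν.restrict v) = (ν.prod ν).restrict (Set.univ ×ˢ v) := by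
        rw [← Measure.prod_restrict, Measure.restrict_univ]
      rw [h2]; exact hDint.integrableOn
    exact h1.integral_prod_left
  have hgmap : Integrable g (ν.map j) := by
    rw [integrable_map_measure hgm.aestronglyMeasurable hj.aemeasurable]; exact hgint
  have hg0 : g =ᵐ[ν.map j] 0 :=
    ae_eq_zero_of_forall_setIntegral_eq_of_sigmaFinite
      (fun s hs _ => hgmap.integrableOn) (fun s hs _ => key s hs)
  have hcomp : ∀ᵐ w₁ ∂ν, g (j w₁) = 0 := ae_of_ae_map hj.aemeasurable hg0
  rw [fub u hu]
  rw [integral_congr_ae (ae_restrict_of_ae hcomp), integral_zero]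

end Aux

section Aux2

variable {α : Type*} {m m0 : MeasurableSpace α} {μ : Measure α}

lemma aux_mean_eq [IsProbabilityMeasure μ]
    (hm : m ≤ m0) {f g : α → ℝ}
    (hg : g =ᵐ[μ] μ[f|m]) : ∫ x, g x ∂μ = ∫ x, f x ∂μ :=
  (integral_congr_ae hg).trans (integral_condExp hm)

lemma aux_integral_mul_eq [IsProbabilityMeasure μ]
    (hm : m ≤ m0) {f g ψ : α → ℝ} (hf : Integrable f μ)
    (hg : g =ᵐ[μ] μ[f|m]) (hψ : StronglyMeasurable[m] ψ)
    (hint : Integrable (fun x => ψ x * f x) μ) :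
    ∫ x, ψ x * f x ∂μ = ∫ x, ψ x * g x ∂μ := by
  have h1 : μ[(fun x => ψ x * f x)|m] =ᵐ[μ] fun x => ψ x * (μ[f|m]) x :=
    condExp_mul_of_stronglyMeasurable_left hψ hint hf
  calc ∫ x, ψ x * f x ∂μ = ∫ x, (μ[(fun x => ψ x * f x)|m]) x ∂μ := (integral_condExp hm).symm
    _ = ∫ x, ψ x * (μ[f|m]) x ∂μ := integral_congr_ae h1
    _ = ∫ x, ψ x * g x ∂μ := by
        refine integral_congr_ae ?_
        filter_upwards [hg] with x hx
        rw [hx]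

lemma aux_memL2 [IsProbabilityMeasure μ]
    (hm : m ≤ m0) {f g : α → ℝ}
    (hf : MemLp f 2 μ) (hg : g =ᵐ[μ] μ[f|m]) : MemLp g 2 μ := by
  set fL : Lp ℝ 2 μ := hf.toLp f with hfL
  have key : μ[f|m] =ᵐ[μ] (condExpL2 ℝ ℝ hm fL : α → ℝ) := by
    refine ae_eq_of_forall_setIntegral_eq_of_sigmaFinite' hm
      (fun s _ _ => integrable_condExp.integrableOn)
      (fun s _ _ => ((Lp.memLp _).integrable one_le_two).integrableOn)
      (fun s hs hμs => ?_)
      stronglyMeasurable_condExp.aestronglyMeasurable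
      (aestronglyMeasurable_condExpL2 hm fL)
    rw [setIntegral_condExp hm (hf.integrable one_le_two) hs,
      integral_condExpL2_eq hm fL hs hμs.ne]
    exact (setIntegral_congr_ae (hm s hs) ((hf.coeFn_toLp).mono fun x hx _ => hx)).symm
  exact (Lp.memLp _).ae_eq ((hg.trans key).symm)

end Aux2

/-- Variance of the doubly-projected kernel
`A = ℓ(Y₁,Y₂) − θℓ₁(Y₁,X₂) − θℓ₁(Y₂,X₁) + θ²ℓ₂(X₁,X₂)`:
`Var(A) = Var(ℓ(Y₁,Y₂)) − 2θ(2−θ)Var(ℓ₁(Y₁,X₂)) + θ²(2−θ)²Var(ℓ₂(X₁,X₂))`. -/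
theorem stmt_11 {Ω E F : Type*} [MeasurableSpace Ω] [MeasurableSpace E]
    [MeasurableSpace F]
    (μ : Measure Ω) [IsProbabilityMeasure μ]
    (X₁ X₂ : Ω → E) (Y₁ Y₂ : Ω → F)
    (hX₁ : Measurable X₁) (hX₂ : Measurable X₂)
    (hY₁ : Measurable Y₁) (hY₂ : Measurable Y₂)
    (hind : IndepFun (fun ω => (X₁ ω, Y₁ ω)) (fun ω => (X₂ ω, Y₂ ω)) μ)
    (hid : IdentDistrib (fun ω => (X₁ ω, Y₁ ω)) (fun ω => (X₂ ω, Y₂ ω)) μ μ)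
    (ℓ : F → F → ℝ) (hsym : ∀ a b, ℓ a b = ℓ b a)
    (hℓm : Measurable (Function.uncurry ℓ))
    (hℓ2 : MemLp (fun ω => ℓ (Y₁ ω) (Y₂ ω)) 2 μ)
    (L1 : F → E → ℝ) (L2 : E → E → ℝ)
    (hL1m : Measurable (Function.uncurry L1))
    (hL2m : Measurable (Function.uncurry L2))
    (h1 : (fun ω => L1 (Y₁ ω) (X₂ ω)) =ᵐ[μ]
      μ[fun ω => ℓ (Y₁ ω) (Y₂ ω) |
        MeasurableSpace.comap (fun ω => (Y₁ ω, X₂ ω)) inferInstance])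
    (h2 : (fun ω => L2 (X₁ ω) (X₂ ω)) =ᵐ[μ]
      μ[fun ω => ℓ (Y₁ ω) (Y₂ ω) |
        MeasurableSpace.comap (fun ω => (X₁ ω, X₂ ω)) inferInstance])
    (θ : ℝ) (hθ0 : 0 ≤ θ) (hθ1 : θ ≤ 1) :
    variance (fun ω => ℓ (Y₁ ω) (Y₂ ω) - θ * L1 (Y₁ ω) (X₂ ω)
        - θ * L1 (Y₂ ω) (X₁ ω) + θ ^ 2 * L2 (X₁ ω) (X₂ ω)) μ =
      variance (fun ω => ℓ (Y₁ ω) (Y₂ ω)) μ -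
        2 * θ * (2 - θ) * variance (fun ω => L1 (Y₁ ω) (X₂ ω)) μ +
        θ ^ 2 * (2 - θ) ^ 2 * variance (fun ω => L2 (X₁ ω) (X₂ ω)) μ := by
  -- basic measurable maps
  have hW₁ : Measurable (fun ω => (X₁ ω, Y₁ ω)) := hX₁.prodMk hY₁
  have hW₂ : Measurable (fun ω => (X₂ ω, Y₂ ω)) := hX₂.prodMk hY₂
  set T : Ω → (E × F) × (E × F) := fun ω => ((X₁ ω, Y₁ ω), (X₂ ω, Y₂ ω)) with hTdef
  have hT : Measurable T := hW₁.prodMk hW₂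
  set ν : Measure (E × F) := μ.map (fun ω => (X₁ ω, Y₁ ω)) with hνdef
  haveI : IsProbabilityMeasure ν := Measure.isProbabilityMeasure_map hW₁.aemeasurable
  set π : Measure ((E × F) × (E × F)) := ν.prod ν with hπdef
  have hπ : μ.map T = π := by
    rw [hπdef, hνdef,
      (indepFun_iff_map_prod_eq_prod_map_map hW₁.aemeasurable hW₂.aemeasurable).mp hind,
      ← hid.map_eq]
  -- the five functions on the product space
  set Λ : (E × F) × (E × F) → ℝ := fun w => ℓ w.1.2 w.2.2 with hΛdef
  set Λ1 : (E × F) × (E × F) → ℝ := fun w => L1 w.1.2 w.2.1 with hΛ1def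
  set Λ1' : (E × F) × (E × F) → ℝ := fun w => L1 w.2.2 w.1.1 with hΛ1'def
  set Λ2 : (E × F) × (E × F) → ℝ := fun w => L2 w.1.1 w.2.1 with hΛ2def
  set Λ2' : (E × F) × (E × F) → ℝ := fun w => L2 w.2.1 w.1.1 with hΛ2'def
  have hΛm : Measurable Λ :=
    hℓm.comp ((measurable_snd.comp measurable_fst).prodMk (measurable_snd.comp measurable_snd))
  have hΛ1m : Measurable Λ1 :=
    hL1m.comp ((measurable_snd.comp measurable_fst).prodMk (measurable_fst.comp measurable_snd))
  have hΛ1'm : Measurable Λ1' :=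
    hL1m.comp ((measurable_snd.comp measurable_snd).prodMk (measurable_fst.comp measurable_fst))
  have hΛ2m : Measurable Λ2 :=
    hL2m.comp ((measurable_fst.comp measurable_fst).prodMk (measurable_fst.comp measurable_snd))
  have hΛ2'm : Measurable Λ2' :=
    hL2m.comp ((measurable_fst.comp measurable_snd).prodMk (measurable_fst.comp measurable_fst))
  -- σ-algebras on Ω
  have hmb : MeasurableSpace.comap (fun ω => (Y₁ ω, X₂ ω)) inferInstance
      ≤ (inferInstance : MeasurableSpace Ω) := (hY₁.prodMk hX₂).comap_le
  have hmc : MeasurableSpace.comap (fun ω => (X₁ ω, X₂ ω)) inferInstance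
      ≤ (inferInstance : MeasurableSpace Ω) := (hX₁.prodMk hX₂).comap_le
  -- L² and integrability on Ω
  have hA₁2 : MemLp (fun ω => L1 (Y₁ ω) (X₂ ω)) 2 μ := aux_memL2 hmb hℓ2 h1
  have hB2 : MemLp (fun ω => L2 (X₁ ω) (X₂ ω)) 2 μ := aux_memL2 hmc hℓ2 h2
  have hlint : Integrable (fun ω => ℓ (Y₁ ω) (Y₂ ω)) μ := hℓ2.integrable one_le_two
  -- L² on π
  have hΛπ : MemLp Λ 2 π := by
    rw [← hπ]
    exact (memLp_map_measure_iff hΛm.aestronglyMeasurable hT.aemeasurable).mpr hℓ2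
  have hΛ1π : MemLp Λ1 2 π := by
    rw [← hπ]
    exact (memLp_map_measure_iff hΛ1m.aestronglyMeasurable hT.aemeasurable).mpr hA₁2
  have hΛ2π : MemLp Λ2 2 π := by
    rw [← hπ]
    exact (memLp_map_measure_iff hΛ2m.aestronglyMeasurable hT.aemeasurable).mpr hB2
  have hswap : π.map Prod.swap = π := Measure.prod_swap
  have hΛ1'π : MemLp Λ1' 2 π := by
    have h := (memLp_map_measure_iff hΛ1m.aestronglyMeasurable
      measurable_swap.aemeasurable).mp (by rwa [hswap])
    exact h
  have hΛ2'π : MemLp Λ2' 2 π := by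
    have h := (memLp_map_measure_iff hΛ2m.aestronglyMeasurable
      measurable_swap.aemeasurable).mp (by rwa [hswap])
    exact h
  have hA₂2 : MemLp (fun ω => L1 (Y₂ ω) (X₁ ω)) 2 μ := by
    have h := (memLp_map_measure_iff hΛ1'm.aestronglyMeasurable hT.aemeasurable).mp
      (by rwa [hπ])
    exact h
  have hΛint : Integrable Λ π := hΛπ.integrable one_le_two
  have hΛ1int : Integrable Λ1 π := hΛ1π.integrable one_le_two
  have hΛ1'int : Integrable Λ1' π := hΛ1'π.integrable one_le_two
  have hΛ2int : Integrable Λ2 π := hΛ2π.integrable one_le_two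
  have hΛ2'int : Integrable Λ2' π := hΛ2'π.integrable one_le_two
  -- transported conditional-expectation set identities
  have hYX₂ : Measurable (fun ω => (Y₁ ω, X₂ ω)) := hY₁.prodMk hX₂
  have hXX : Measurable (fun ω => (X₁ ω, X₂ ω)) := hX₁.prodMk hX₂
  have H1 : ∀ t : Set (F × E), MeasurableSet t →
      ∫ w in (fun w : (E × F) × (E × F) => (w.1.2, w.2.1)) ⁻¹' t, Λ w ∂π
        = ∫ w in (fun w : (E × F) × (E × F) => (w.1.2, w.2.1)) ⁻¹' t, Λ1 w ∂π := by
    intro t ht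
    have hproj : Measurable (fun w : (E × F) × (E × F) => (w.1.2, w.2.1)) :=
      (measurable_snd.comp measurable_fst).prodMk (measurable_fst.comp measurable_snd)
    have hsm : MeasurableSet ((fun w : (E × F) × (E × F) => (w.1.2, w.2.1)) ⁻¹' t) := hproj ht
    rw [← hπ, setIntegral_map hsm hΛm.aestronglyMeasurable hT.aemeasurable,
      setIntegral_map hsm hΛ1m.aestronglyMeasurable hT.aemeasurable]
    have hsmem : MeasurableSet[MeasurableSpace.comap (fun ω => (Y₁ ω, X₂ ω)) inferInstance]
        ((fun ω => (Y₁ ω, X₂ ω)) ⁻¹' t) := ⟨t, ht, rfl⟩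
    have e1 : ∫ ω in (fun ω => (Y₁ ω, X₂ ω)) ⁻¹' t, L1 (Y₁ ω) (X₂ ω) ∂μ
        = ∫ ω in (fun ω => (Y₁ ω, X₂ ω)) ⁻¹' t, ℓ (Y₁ ω) (Y₂ ω) ∂μ := by
      rw [setIntegral_congr_ae (hYX₂ ht) (h1.mono fun x hx _ => hx)]
      exact setIntegral_condExp hmb hlint hsmem
    exact e1.symm
  have H2 : ∀ t : Set (E × E), MeasurableSet t →
      ∫ w in (fun w : (E × F) × (E × F) => (w.1.1, w.2.1)) ⁻¹' t, Λ w ∂π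
        = ∫ w in (fun w : (E × F) × (E × F) => (w.1.1, w.2.1)) ⁻¹' t, Λ2 w ∂π := by
    intro t ht
    have hproj : Measurable (fun w : (E × F) × (E × F) => (w.1.1, w.2.1)) :=
      (measurable_fst.comp measurable_fst).prodMk (measurable_fst.comp measurable_snd)
    have hsm : MeasurableSet ((fun w : (E × F) × (E × F) => (w.1.1, w.2.1)) ⁻¹' t) := hproj ht
    rw [← hπ, setIntegral_map hsm hΛm.aestronglyMeasurable hT.aemeasurable,
      setIntegral_map hsm hΛ2m.aestronglyMeasurable hT.aemeasurable]
    have hsmem : MeasurableSet[MeasurableSpace.comap (fun ω => (X₁ ω, X₂ ω)) inferInstance]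
        ((fun ω => (X₁ ω, X₂ ω)) ⁻¹' t) := ⟨t, ht, rfl⟩
    have e1 : ∫ ω in (fun ω => (X₁ ω, X₂ ω)) ⁻¹' t, L2 (X₁ ω) (X₂ ω) ∂μ
        = ∫ ω in (fun ω => (X₁ ω, X₂ ω)) ⁻¹' t, ℓ (Y₁ ω) (Y₂ ω) ∂μ := by
      rw [setIntegral_congr_ae (hXX ht) (h2.mono fun x hx _ => hx)]
      exact setIntegral_condExp hmc hlint hsmem
    exact e1.symm
  -- swap helper for set integrals
  have swapSet : ∀ s : Set ((E × F) × (E × F)), MeasurableSet s →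
      ∀ f : (E × F) × (E × F) → ℝ, AEStronglyMeasurable f π →
      ∫ w in s, f w ∂π = ∫ w in Prod.swap ⁻¹' s, f (Prod.swap w) ∂π := by
    intro s hs f hf
    conv_lhs => rw [← hswap]
    rw [setIntegral_map hs (by rwa [hswap]) measurable_swap.aemeasurable]
  -- Step 1 : strengthened version of h1 on rectangles
  have Step1 : ∀ u : Set (E × F), MeasurableSet u → ∀ v : Set E, MeasurableSet v →
      ∫ w in u ×ˢ (Prod.fst ⁻¹' v : Set (E × F)), (Λ w - Λ1 w) ∂π = 0 := by
    intro u hu v hv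
    have hD₀ : StronglyMeasurable (fun p : F × (E × F) => ℓ p.1 p.2.2 - L1 p.1 p.2.1) :=
      ((hℓm.comp (measurable_fst.prodMk (measurable_snd.comp measurable_snd))).sub
        (hL1m.comp (measurable_fst.prodMk (measurable_fst.comp measurable_snd)))).stronglyMeasurable
    have hz : ∀ b : Set F, MeasurableSet b →
        ∫ w in ((Prod.snd ⁻¹' b : Set (E × F)) ×ˢ (Prod.fst ⁻¹' v : Set (E × F))),
          (ℓ w.1.2 w.2.2 - L1 w.1.2 w.2.1) ∂π = 0 := by
      intro b hb
      have hsm : MeasurableSet ((Prod.snd ⁻¹' b : Set (E × F)) ×ˢ (Prod.fst ⁻¹' v : Set (E × F))) :=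
        (measurable_snd hb).prod (measurable_fst hv)
      have hsplit : ∫ w in ((Prod.snd ⁻¹' b : Set (E × F)) ×ˢ (Prod.fst ⁻¹' v : Set (E × F))),
          (Λ w - Λ1 w) ∂π
          = (∫ w in ((Prod.snd ⁻¹' b : Set (E × F)) ×ˢ (Prod.fst ⁻¹' v : Set (E × F))), Λ w ∂π)
            - ∫ w in ((Prod.snd ⁻¹' b : Set (E × F)) ×ˢ (Prod.fst ⁻¹' v : Set (E × F))), Λ1 w ∂π :=
        integral_sub hΛint.integrableOn hΛ1int.integrableOn
      have hh := H1 (b ×ˢ v) (hb.prod hv)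
      have : ∫ w in ((Prod.snd ⁻¹' b : Set (E × F)) ×ˢ (Prod.fst ⁻¹' v : Set (E × F))), Λ w ∂π
          = ∫ w in ((Prod.snd ⁻¹' b : Set (E × F)) ×ˢ (Prod.fst ⁻¹' v : Set (E × F))), Λ1 w ∂π := hh
      exact by rw [hsplit, this, sub_self]
    have hres := aux_slice (ν := ν) hD₀ measurable_snd
      (by exact hΛint.sub hΛ1int) (measurable_fst hv) (by exact hz) hu
    exact hres
  -- rectangles in (X₁, X₂)
  have Hab : ∀ a : Set E, MeasurableSet a → ∀ b : Set E, MeasurableSet b →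
      ∫ w in ((Prod.fst ⁻¹' a : Set (E × F)) ×ˢ (Prod.fst ⁻¹' b : Set (E × F))),
        (Λ1 w - Λ2 w) ∂π = 0 := by
    intro a ha b hb
    have h₁ : ∫ w in ((Prod.fst ⁻¹' a : Set (E × F)) ×ˢ (Prod.fst ⁻¹' b : Set (E × F))), Λ1 w ∂π
        = ∫ w in ((Prod.fst ⁻¹' a : Set (E × F)) ×ˢ (Prod.fst ⁻¹' b : Set (E × F))), Λ w ∂π := by
      have hs1 := Step1 (Prod.fst ⁻¹' a) (measurable_fst ha) b hb
      have hsplit : ∫ w in ((Prod.fst ⁻¹' a : Set (E × F)) ×ˢ (Prod.fst ⁻¹' b : Set (E × F))),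
          (Λ w - Λ1 w) ∂π
          = (∫ w in ((Prod.fst ⁻¹' a : Set (E × F)) ×ˢ (Prod.fst ⁻¹' b : Set (E × F))), Λ w ∂π)
            - ∫ w in ((Prod.fst ⁻¹' a : Set (E × F)) ×ˢ (Prod.fst ⁻¹' b : Set (E × F))), Λ1 w ∂π :=
        integral_sub hΛint.integrableOn hΛ1int.integrableOn
      rw [hsplit] at hs1
      linarith
    have h₂ : ∫ w in ((Prod.fst ⁻¹' a : Set (E × F)) ×ˢ (Prod.fst ⁻¹' b : Set (E × F))), Λ w ∂π
        = ∫ w in ((Prod.fst ⁻¹' a : Set (E × F)) ×ˢ (Prod.fst ⁻¹' b : Set (E × F))), Λ2 w ∂π :=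
      H2 (a ×ˢ b) (ha.prod hb)
    rw [integral_sub hΛ1int.integrableOn hΛ2int.integrableOn, h₁, h₂, sub_self]
  -- the key extension: Λ2 is the conditional expectation of Λ1 given (X₁, (X₂,Y₂))
  have hrm : Measurable (fun w : (E × F) × (E × F) => (w.1.1, w.2)) :=
    (measurable_fst.comp measurable_fst).prodMk measurable_snd
  have G4 : ∀ t : Set (E × (E × F)), MeasurableSet t →
      ∫ w in (fun w : (E × F) × (E × F) => (w.1.1, w.2)) ⁻¹' t, Λ1 w ∂π
        = ∫ w in (fun w : (E × F) × (E × F) => (w.1.1, w.2)) ⁻¹' t, Λ2 w ∂π := by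
    have meanΛ1 : ∫ w, Λ1 w ∂π = ∫ w, Λ w ∂π := by
      have := (H1 Set.univ MeasurableSet.univ).symm
      simpa [Measure.restrict_univ] using this
    have meanΛ2 : ∫ w, Λ2 w ∂π = ∫ w, Λ w ∂π := by
      have := (H2 Set.univ MeasurableSet.univ).symm
      simpa [Measure.restrict_univ] using this
    intro t ht
    refine MeasurableSpace.induction_on_inter
      (C := fun t _ => ∫ w in (fun w : (E × F) × (E × F) => (w.1.1, w.2)) ⁻¹' t, Λ1 w ∂π
        = ∫ w in (fun w : (E × F) × (E × F) => (w.1.1, w.2)) ⁻¹' t, Λ2 w ∂π)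
      generateFrom_prod.symm isPiSystem_prod ?_ ?_ ?_ ?_ t ht
    · simp
    · -- rectangles
      rintro t' ⟨a, ha, c, hc, rfl⟩
      simp only [Set.mem_setOf_eq] at ha hc
      have hsetm : MeasurableSet ((Prod.fst ⁻¹' a : Set (E × F)) ×ˢ c) :=
        (measurable_fst ha).prod hc
      have hpre : (fun w : (E × F) × (E × F) => (w.1.1, w.2)) ⁻¹' (a ×ˢ c)
          = (Prod.fst ⁻¹' a : Set (E × F)) ×ˢ c := rfl
      rw [hpre]
      -- it suffices to show the integral of the difference vanishes
      have hdiff : ∫ w in ((Prod.fst ⁻¹' a : Set (E × F)) ×ˢ c), (Λ1 w - Λ2 w) ∂π = 0 := by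
        -- swap coordinates
        have hs1 : ∫ w in ((Prod.fst ⁻¹' a : Set (E × F)) ×ˢ c), (Λ1 w - Λ2 w) ∂π
            = ∫ w in c ×ˢ (Prod.fst ⁻¹' a : Set (E × F)),
                (L1 w.2.2 w.1.1 - L2 w.2.1 w.1.1) ∂π := by
          rw [swapSet _ hsetm _ (by exact (hΛ1m.sub hΛ2m).aestronglyMeasurable),
            Set.preimage_swap_prod]
          rfl
        rw [hs1]
        have hD₀ : StronglyMeasurable (fun p : E × (E × F) => L1 p.2.2 p.1 - L2 p.2.1 p.1) :=
          ((hL1m.comp ((measurable_snd.comp measurable_snd).prodMk measurable_fst)).sub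
            (hL2m.comp ((measurable_fst.comp measurable_snd).prodMk
              measurable_fst))).stronglyMeasurable
        have hz : ∀ b : Set E, MeasurableSet b →
            ∫ w in ((Prod.fst ⁻¹' b : Set (E × F)) ×ˢ (Prod.fst ⁻¹' a : Set (E × F))),
              (L1 w.2.2 w.1.1 - L2 w.2.1 w.1.1) ∂π = 0 := by
          intro b hb
          have hback : ∫ w in ((Prod.fst ⁻¹' b : Set (E × F)) ×ˢ (Prod.fst ⁻¹' a : Set (E × F))),
              (L1 w.2.2 w.1.1 - L2 w.2.1 w.1.1) ∂π
              = ∫ w in ((Prod.fst ⁻¹' a : Set (E × F)) ×ˢ (Prod.fst ⁻¹' b : Set (E × F))),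
                (Λ1 w - Λ2 w) ∂π := by
            rw [swapSet _ ((measurable_fst hb).prod (measurable_fst ha)) _
              (by exact ((hL1m.comp ((measurable_snd.comp measurable_snd).prodMk
                  (measurable_fst.comp measurable_fst))).sub
                (hL2m.comp ((measurable_fst.comp measurable_snd).prodMk
                  (measurable_fst.comp measurable_fst)))).aestronglyMeasurable),
              Set.preimage_swap_prod]
            rfl
          rw [hback]
          exact Hab a ha b hb
        have hDint2 : Integrable
            (fun w : (E × F) × (E × F) => L1 w.2.2 w.1.1 - L2 w.2.1 w.1.1) π := by
          exact hΛ1'int.sub hΛ2'int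
        exact aux_slice (ν := ν) hD₀ measurable_fst (by exact hDint2)
          (measurable_fst ha) (by exact hz) hc
      have hsplit : ∫ w in ((Prod.fst ⁻¹' a : Set (E × F)) ×ˢ c), (Λ1 w - Λ2 w) ∂π
          = (∫ w in ((Prod.fst ⁻¹' a : Set (E × F)) ×ˢ c), Λ1 w ∂π)
            - ∫ w in ((Prod.fst ⁻¹' a : Set (E × F)) ×ˢ c), Λ2 w ∂π :=
        integral_sub hΛ1int.integrableOn hΛ2int.integrableOn
      rw [hsplit] at hdiff
      linarith
    · -- complements
      intro t' ht' hC
      have hpre : (fun w : (E × F) × (E × F) => (w.1.1, w.2)) ⁻¹' t'ᶜ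
          = ((fun w : (E × F) × (E × F) => (w.1.1, w.2)) ⁻¹' t')ᶜ := rfl
      have hmt : MeasurableSet ((fun w : (E × F) × (E × F) => (w.1.1, w.2)) ⁻¹' t') := hrm ht'
      have h₁ := integral_add_compl hmt hΛ1int
      have h₂ := integral_add_compl hmt hΛ2int
      rw [hpre]
      have := meanΛ1.trans meanΛ2.symm
      linarith
    · -- disjoint unions
      intro f hdisj hfm hCf
      have hpre : (fun w : (E × F) × (E × F) => (w.1.1, w.2)) ⁻¹' (⋃ i, f i)
          = ⋃ i, (fun w : (E × F) × (E × F) => (w.1.1, w.2)) ⁻¹' (f i) := by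
        rw [Set.preimage_iUnion]
      rw [hpre,
        integral_iUnion (fun i => hrm (hfm i)) (fun i j hij => (hdisj hij).preimage _)
          hΛ1int.integrableOn,
        integral_iUnion (fun i => hrm (hfm i)) (fun i j hij => (hdisj hij).preimage _)
          hΛ2int.integrableOn]
      exact tsum_congr hCf
  -- conditional expectation of Λ1 given (X₁,(X₂,Y₂)) on the product space
  have hmr : MeasurableSpace.comap (fun w : (E × F) × (E × F) => (w.1.1, w.2)) inferInstance
      ≤ (inferInstance : MeasurableSpace ((E × F) × (E × F))) := hrm.comap_le
  have hcondπ : Λ2 =ᵐ[π]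
      π[Λ1| MeasurableSpace.comap (fun w : (E × F) × (E × F) => (w.1.1, w.2)) inferInstance] := by
    refine ae_eq_condExp_of_forall_setIntegral_eq hmr hΛ1int
      (fun s _ _ => hΛ2int.integrableOn) (fun s hs _ => ?_) ?_
    · obtain ⟨t, ht, rfl⟩ := hs
      exact (G4 t ht).symm
    · exact (aux_meas_comap (fun w : (E × F) × (E × F) => (w.1.1, w.2))
        (hL2m.comp (measurable_fst.prodMk
          (measurable_fst.comp measurable_snd)))).stronglyMeasurable.aestronglyMeasurable
  have e9 : ∫ w, Λ2 w * Λ1 w ∂π = ∫ w, Λ2 w * Λ2 w ∂π := by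
    refine aux_integral_mul_eq hmr hΛ1int hcondπ ?_ (aux_int_mul hΛ2π hΛ1π)
    exact (aux_meas_comap (fun w : (E × F) × (E × F) => (w.1.1, w.2))
      (hL2m.comp (measurable_fst.prodMk
        (measurable_fst.comp measurable_snd)))).stronglyMeasurable
  have e10 : ∫ w, Λ1' w * Λ1 w ∂π = ∫ w, Λ1' w * Λ2 w ∂π := by
    refine aux_integral_mul_eq hmr hΛ1int hcondπ ?_ (aux_int_mul hΛ1'π hΛ1π)
    exact (aux_meas_comap (fun w : (E × F) × (E × F) => (w.1.1, w.2))
      (hL1m.comp ((measurable_snd.comp measurable_snd).prodMk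
        measurable_fst))).stronglyMeasurable
  -- symmetry of Λ2
  have hqm : Measurable (fun w : (E × F) × (E × F) => (w.1.1, w.2.1)) :=
    (measurable_fst.comp measurable_fst).prodMk (measurable_fst.comp measurable_snd)
  have hmq : MeasurableSpace.comap (fun w : (E × F) × (E × F) => (w.1.1, w.2.1)) inferInstance
      ≤ (inferInstance : MeasurableSpace ((E × F) × (E × F))) := hqm.comap_le
  have H2' : ∀ t : Set (E × E), MeasurableSet t →
      ∫ w in (fun w : (E × F) × (E × F) => (w.1.1, w.2.1)) ⁻¹' t, Λ2' w ∂π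
        = ∫ w in (fun w : (E × F) × (E × F) => (w.1.1, w.2.1)) ⁻¹' t, Λ w ∂π := by
    intro t ht
    have hA : ∫ w in (fun w : (E × F) × (E × F) => (w.1.1, w.2.1)) ⁻¹' t, Λ2' w ∂π
        = ∫ w in (fun w : (E × F) × (E × F) => (w.1.1, w.2.1)) ⁻¹' (Prod.swap ⁻¹' t),
            Λ2 w ∂π := by
      rw [swapSet _ (hqm ht) _ hΛ2'm.aestronglyMeasurable]
      rfl
    have hB := H2 (Prod.swap ⁻¹' t) (measurable_swap ht)
    have hC : ∫ w in (fun w : (E × F) × (E × F) => (w.1.1, w.2.1)) ⁻¹' (Prod.swap ⁻¹' t),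
          Λ w ∂π
        = ∫ w in (fun w : (E × F) × (E × F) => (w.1.1, w.2.1)) ⁻¹' t, Λ w ∂π := by
      rw [swapSet _ (hqm (measurable_swap ht)) _ hΛm.aestronglyMeasurable]
      have hsetq : Prod.swap ⁻¹' ((fun w : (E × F) × (E × F) => (w.1.1, w.2.1)) ⁻¹'
            (Prod.swap ⁻¹' t))
          = (fun w : (E × F) × (E × F) => (w.1.1, w.2.1)) ⁻¹' t := by
        ext w
        simp [Prod.swap]
      rw [hsetq]
      exact integral_congr_ae (Filter.Eventually.of_forall fun w => hsym _ _)
    rw [hA, ← hB, hC]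
  have c₁ : Λ2 =ᵐ[π]
      π[Λ| MeasurableSpace.comap (fun w : (E × F) × (E × F) => (w.1.1, w.2.1)) inferInstance] := by
    refine ae_eq_condExp_of_forall_setIntegral_eq hmq hΛint
      (fun s _ _ => hΛ2int.integrableOn) (fun s hs _ => ?_) ?_
    · obtain ⟨t, ht, rfl⟩ := hs
      exact (H2 t ht).symm
    · exact (aux_meas_comap (fun w : (E × F) × (E × F) => (w.1.1, w.2.1))
        (hL2m.comp (measurable_fst.prodMk measurable_snd))).stronglyMeasurable.aestronglyMeasurable
  have c₂ : Λ2' =ᵐ[π]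
      π[Λ| MeasurableSpace.comap (fun w : (E × F) × (E × F) => (w.1.1, w.2.1)) inferInstance] := by
    refine ae_eq_condExp_of_forall_setIntegral_eq hmq hΛint
      (fun s _ _ => hΛ2'int.integrableOn) (fun s hs _ => ?_) ?_
    · obtain ⟨t, ht, rfl⟩ := hs
      exact H2' t ht
    · exact (aux_meas_comap (fun w : (E × F) × (E × F) => (w.1.1, w.2.1))
        (hL2m.comp (measurable_snd.prodMk measurable_fst))).stronglyMeasurable.aestronglyMeasurable
  have e8 : Λ2' =ᵐ[π] Λ2 := c₂.trans c₁.symm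
  -- transports between μ and π
  have tr : ∀ f : (E × F) × (E × F) → ℝ, AEStronglyMeasurable f π →
      ∫ w, f w ∂π = ∫ ω, f (T ω) ∂μ := by
    intro f hf
    rw [← hπ]
    exact integral_map hT.aemeasurable (by rwa [hπ])
  have trswap : ∀ f : (E × F) × (E × F) → ℝ, AEStronglyMeasurable f π →
      ∫ w, f w ∂π = ∫ w, f (Prod.swap w) ∂π := by
    intro f hf
    conv_lhs => rw [← hswap]
    exact integral_map measurable_swap.aemeasurable (by rwa [hswap])
  have commIntμ : ∀ f g : Ω → ℝ, ∫ ω, f ω * g ω ∂μ = ∫ ω, g ω * f ω ∂μ := fun f g =>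
    integral_congr_ae (Filter.Eventually.of_forall fun ω => mul_comm _ _)
  have commIntπ : ∀ f g : (E × F) × (E × F) → ℝ,
      ∫ w, f w * g w ∂π = ∫ w, g w * f w ∂π := fun f g =>
    integral_congr_ae (Filter.Eventually.of_forall fun ω => mul_comm _ _)
  -- strongly measurable versions on Ω of the conditioned functions
  have hψ₁ : StronglyMeasurable[MeasurableSpace.comap (fun ω => (Y₁ ω, X₂ ω)) inferInstance]
      (fun ω => L1 (Y₁ ω) (X₂ ω)) :=
    (aux_meas_comap (fun ω => (Y₁ ω, X₂ ω)) hL1m).stronglyMeasurable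
  have hψ₂ : StronglyMeasurable[MeasurableSpace.comap (fun ω => (X₁ ω, X₂ ω)) inferInstance]
      (fun ω => L2 (X₁ ω) (X₂ ω)) :=
    (aux_meas_comap (fun ω => (X₁ ω, X₂ ω)) hL2m).stronglyMeasurable
  -- μ-level identities
  have k₁ : ∫ ω, L1 (Y₁ ω) (X₂ ω) ∂μ = ∫ ω, ℓ (Y₁ ω) (Y₂ ω) ∂μ := aux_mean_eq hmb h1
  have k₃ : ∫ ω, L2 (X₁ ω) (X₂ ω) ∂μ = ∫ ω, ℓ (Y₁ ω) (Y₂ ω) ∂μ := aux_mean_eq hmc h2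
  have k₄ : ∫ ω, ℓ (Y₁ ω) (Y₂ ω) * L1 (Y₁ ω) (X₂ ω) ∂μ
      = ∫ ω, L1 (Y₁ ω) (X₂ ω) * L1 (Y₁ ω) (X₂ ω) ∂μ :=
    (commIntμ _ _).trans (aux_integral_mul_eq hmb hlint h1 hψ₁ (aux_int_mul hA₁2 hℓ2))
  have k₇ : ∫ ω, ℓ (Y₁ ω) (Y₂ ω) * L2 (X₁ ω) (X₂ ω) ∂μ
      = ∫ ω, L2 (X₁ ω) (X₂ ω) * L2 (X₁ ω) (X₂ ω) ∂μ :=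
    (commIntμ _ _).trans (aux_integral_mul_eq hmc hlint h2 hψ₂ (aux_int_mul hB2 hℓ2))
  -- π-level facts
  have fm1 : ∫ w, Λ1 w ∂π = ∫ w, Λ w ∂π := by
    have := (H1 Set.univ MeasurableSet.univ).symm
    simpa [Measure.restrict_univ] using this
  have fmΛ : ∫ w, Λ w ∂π = ∫ ω, ℓ (Y₁ ω) (Y₂ ω) ∂μ := tr Λ hΛm.aestronglyMeasurable
  have k₂ : ∫ ω, L1 (Y₂ ω) (X₁ ω) ∂μ = ∫ ω, ℓ (Y₁ ω) (Y₂ ω) ∂μ := by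
    have t1 : ∫ w, Λ1' w ∂π = ∫ ω, L1 (Y₂ ω) (X₁ ω) ∂μ := tr Λ1' hΛ1'm.aestronglyMeasurable
    have t2 : ∫ w, Λ1' w ∂π = ∫ w, Λ1 w ∂π := trswap Λ1' hΛ1'm.aestronglyMeasurable
    rw [← t1, t2, fm1, fmΛ]
  have f3 : ∫ w, Λ w * Λ1 w ∂π
      = ∫ ω, L1 (Y₁ ω) (X₂ ω) * L1 (Y₁ ω) (X₂ ω) ∂μ :=
    (tr (fun w => Λ w * Λ1 w) ((hΛm.mul hΛ1m).aestronglyMeasurable)).trans k₄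
  have fP : ∫ w, Λ1 w * Λ1 w ∂π = ∫ ω, L1 (Y₁ ω) (X₂ ω) * L1 (Y₁ ω) (X₂ ω) ∂μ :=
    tr (fun w => Λ1 w * Λ1 w) ((hΛ1m.mul hΛ1m).aestronglyMeasurable)
  have fQ : ∫ w, Λ2 w * Λ2 w ∂π = ∫ ω, L2 (X₁ ω) (X₂ ω) * L2 (X₁ ω) (X₂ ω) ∂μ :=
    tr (fun w => Λ2 w * Λ2 w) ((hΛ2m.mul hΛ2m).aestronglyMeasurable)
  have f4 : ∫ w, Λ w * Λ1' w ∂π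
      = ∫ ω, L1 (Y₁ ω) (X₂ ω) * L1 (Y₁ ω) (X₂ ω) ∂μ := by
    rw [trswap (fun w => Λ w * Λ1' w) ((hΛm.mul hΛ1'm).aestronglyMeasurable)]
    have hcongr : ∫ w, (fun w => Λ w * Λ1' w) (Prod.swap w) ∂π = ∫ w, Λ w * Λ1 w ∂π :=
      integral_congr_ae (Filter.Eventually.of_forall fun w => by
        show ℓ w.2.2 w.1.2 * L1 w.1.2 w.2.1 = ℓ w.1.2 w.2.2 * L1 w.1.2 w.2.1
        rw [hsym])
    rw [hcongr, f3]
  have k₅ : ∫ ω, ℓ (Y₁ ω) (Y₂ ω) * L1 (Y₂ ω) (X₁ ω) ∂μ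
      = ∫ ω, L1 (Y₁ ω) (X₂ ω) * L1 (Y₁ ω) (X₂ ω) ∂μ :=
    (tr (fun w => Λ w * Λ1' w) ((hΛm.mul hΛ1'm).aestronglyMeasurable)).symm.trans f4
  have f6 : ∫ w, Λ1' w * Λ1' w ∂π
      = ∫ ω, L1 (Y₁ ω) (X₂ ω) * L1 (Y₁ ω) (X₂ ω) ∂μ := by
    rw [trswap (fun w => Λ1' w * Λ1' w) ((hΛ1'm.mul hΛ1'm).aestronglyMeasurable)]
    exact fP
  have k₆ : ∫ ω, L1 (Y₂ ω) (X₁ ω) * L1 (Y₂ ω) (X₁ ω) ∂μ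
      = ∫ ω, L1 (Y₁ ω) (X₂ ω) * L1 (Y₁ ω) (X₂ ω) ∂μ :=
    (tr (fun w => Λ1' w * Λ1' w) ((hΛ1'm.mul hΛ1'm).aestronglyMeasurable)).symm.trans f6
  have f8 : ∫ w, Λ1 w * Λ2 w ∂π = ∫ ω, L2 (X₁ ω) (X₂ ω) * L2 (X₁ ω) (X₂ ω) ∂μ :=
    (commIntπ _ _).trans (e9.trans fQ)
  have f9 : ∫ w, Λ1' w * Λ2 w ∂π = ∫ ω, L2 (X₁ ω) (X₂ ω) * L2 (X₁ ω) (X₂ ω) ∂μ := by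
    rw [trswap (fun w => Λ1' w * Λ2 w) ((hΛ1'm.mul hΛ2m).aestronglyMeasurable)]
    have hcongr : ∫ w, (fun w => Λ1' w * Λ2 w) (Prod.swap w) ∂π = ∫ w, Λ1 w * Λ2 w ∂π := by
      refine integral_congr_ae ?_
      filter_upwards [e8] with w hw
      show Λ1 w * Λ2' w = Λ1 w * Λ2 w
      rw [hw]
    rw [hcongr, f8]
  have f7 : ∫ w, Λ1 w * Λ1' w ∂π = ∫ ω, L2 (X₁ ω) (X₂ ω) * L2 (X₁ ω) (X₂ ω) ∂μ :=
    (commIntπ _ _).trans (e10.trans f9)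
  have k₈ : ∫ ω, L1 (Y₁ ω) (X₂ ω) * L1 (Y₂ ω) (X₁ ω) ∂μ
      = ∫ ω, L2 (X₁ ω) (X₂ ω) * L2 (X₁ ω) (X₂ ω) ∂μ :=
    (tr (fun w => Λ1 w * Λ1' w) ((hΛ1m.mul hΛ1'm).aestronglyMeasurable)).symm.trans f7
  have k₉ : ∫ ω, L1 (Y₁ ω) (X₂ ω) * L2 (X₁ ω) (X₂ ω) ∂μ
      = ∫ ω, L2 (X₁ ω) (X₂ ω) * L2 (X₁ ω) (X₂ ω) ∂μ :=
    (tr (fun w => Λ1 w * Λ2 w) ((hΛ1m.mul hΛ2m).aestronglyMeasurable)).symm.trans f8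
  have k₁₀ : ∫ ω, L1 (Y₂ ω) (X₁ ω) * L2 (X₁ ω) (X₂ ω) ∂μ
      = ∫ ω, L2 (X₁ ω) (X₂ ω) * L2 (X₁ ω) (X₂ ω) ∂μ :=
    (tr (fun w => Λ1' w * Λ2 w) ((hΛ1'm.mul hΛ2m).aestronglyMeasurable)).symm.trans f9
  -- final computation
  have hAmem : MemLp (fun ω => ℓ (Y₁ ω) (Y₂ ω) - θ * L1 (Y₁ ω) (X₂ ω)
      - θ * L1 (Y₂ ω) (X₁ ω) + θ ^ 2 * L2 (X₁ ω) (X₂ ω)) 2 μ := by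
    exact ((hℓ2.sub (hA₁2.const_mul θ)).sub (hA₂2.const_mul θ)).add (hB2.const_mul (θ ^ 2))
  -- integrability of all products
  have i1 : Integrable (fun ω => ℓ (Y₁ ω) (Y₂ ω) * ℓ (Y₁ ω) (Y₂ ω)) μ := aux_int_mul hℓ2 hℓ2
  have i2 : Integrable (fun ω => L1 (Y₁ ω) (X₂ ω) * L1 (Y₁ ω) (X₂ ω)) μ :=
    aux_int_mul hA₁2 hA₁2
  have i3 : Integrable (fun ω => L1 (Y₂ ω) (X₁ ω) * L1 (Y₂ ω) (X₁ ω)) μ :=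
    aux_int_mul hA₂2 hA₂2
  have i4 : Integrable (fun ω => L2 (X₁ ω) (X₂ ω) * L2 (X₁ ω) (X₂ ω)) μ :=
    aux_int_mul hB2 hB2
  have i5 : Integrable (fun ω => ℓ (Y₁ ω) (Y₂ ω) * L1 (Y₁ ω) (X₂ ω)) μ :=
    aux_int_mul hℓ2 hA₁2
  have i6 : Integrable (fun ω => ℓ (Y₁ ω) (Y₂ ω) * L1 (Y₂ ω) (X₁ ω)) μ :=
    aux_int_mul hℓ2 hA₂2
  have i7 : Integrable (fun ω => ℓ (Y₁ ω) (Y₂ ω) * L2 (X₁ ω) (X₂ ω)) μ :=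
    aux_int_mul hℓ2 hB2
  have i8 : Integrable (fun ω => L1 (Y₁ ω) (X₂ ω) * L1 (Y₂ ω) (X₁ ω)) μ :=
    aux_int_mul hA₁2 hA₂2
  have i9 : Integrable (fun ω => L1 (Y₁ ω) (X₂ ω) * L2 (X₁ ω) (X₂ ω)) μ :=
    aux_int_mul hA₁2 hB2
  have i10 : Integrable (fun ω => L1 (Y₂ ω) (X₁ ω) * L2 (X₁ ω) (X₂ ω)) μ :=
    aux_int_mul hA₂2 hB2
  have iA₁ : Integrable (fun ω => L1 (Y₁ ω) (X₂ ω)) μ := hA₁2.integrable one_le_two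
  have iA₂ : Integrable (fun ω => L1 (Y₂ ω) (X₁ ω)) μ := hA₂2.integrable one_le_two
  have iB : Integrable (fun ω => L2 (X₁ ω) (X₂ ω)) μ := hB2.integrable one_le_two
  -- mean of A
  have s1 : Integrable (fun ω => ℓ (Y₁ ω) (Y₂ ω) - θ * L1 (Y₁ ω) (X₂ ω)) μ := by
    exact hlint.sub (iA₁.const_mul θ)
  have s2 : Integrable (fun ω => ℓ (Y₁ ω) (Y₂ ω) - θ * L1 (Y₁ ω) (X₂ ω)
      - θ * L1 (Y₂ ω) (X₁ ω)) μ := by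
    exact s1.sub (iA₂.const_mul θ)
  have EA1 : ∫ ω, (ℓ (Y₁ ω) (Y₂ ω) - θ * L1 (Y₁ ω) (X₂ ω) - θ * L1 (Y₂ ω) (X₁ ω)
      + θ ^ 2 * L2 (X₁ ω) (X₂ ω)) ∂μ
      = (1 - θ) ^ 2 * ∫ ω, ℓ (Y₁ ω) (Y₂ ω) ∂μ := by
    rw [integral_add s2 (iB.const_mul (θ ^ 2)),
      integral_sub s1 (iA₂.const_mul θ),
      integral_sub hlint (iA₁.const_mul θ),
      integral_const_mul _ _, integral_const_mul _ _, integral_const_mul _ _, k₁, k₂, k₃]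
    ring
  -- second moment of A
  have hE : (fun ω => (ℓ (Y₁ ω) (Y₂ ω) - θ * L1 (Y₁ ω) (X₂ ω) - θ * L1 (Y₂ ω) (X₁ ω)
        + θ ^ 2 * L2 (X₁ ω) (X₂ ω)) ^ 2)
      = fun ω => ℓ (Y₁ ω) (Y₂ ω) * ℓ (Y₁ ω) (Y₂ ω) + (θ * θ * (L1 (Y₁ ω) (X₂ ω) * L1 (Y₁ ω) (X₂ ω)) + (θ * θ * (L1 (Y₂ ω) (X₁ ω) * L1 (Y₂ ω) (X₁ ω)) + (θ ^ 4 * (L2 (X₁ ω) (X₂ ω) * L2 (X₁ ω) (X₂ ω)) + (-(2 * θ) * (ℓ (Y₁ ω) (Y₂ ω) * L1 (Y₁ ω) (X₂ ω)) + (-(2 * θ) * (ℓ (Y₁ ω) (Y₂ ω) * L1 (Y₂ ω) (X₁ ω)) + (2 * θ ^ 2 * (ℓ (Y₁ ω) (Y₂ ω) * L2 (X₁ ω) (X₂ ω)) + (2 * θ ^ 2 * (L1 (Y₁ ω) (X₂ ω) * L1 (Y₂ ω) (X₁ ω)) + (-(2 * θ ^ 3) * (L1 (Y₁ ω) (X₂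 ω) * L2 (X₁ ω) (X₂ ω)) + (-(2 * θ ^ 3) * (L1 (Y₂ ω) (X₁ ω) * L2 (X₁ ω) (X₂ ω))))))))))) :=
    funext fun ω => by ring
  have j9 : Integrable (fun ω => -(2 * θ ^ 3) * (L1 (Y₁ ω) (X₂ ω) * L2 (X₁ ω) (X₂ ω)) + (-(2 * θ ^ 3) * (L1 (Y₂ ω) (X₁ ω) * L2 (X₁ ω) (X₂ ω)))) μ := by
    exact (i9.const_mul _).add (i10.const_mul _)
  have j8 : Integrable (fun ω => 2 * θ ^ 2 * (L1 (Y₁ ω) (X₂ ω) * L1 (Y₂ ω) (X₁ ω)) + (-(2 * θ ^ 3) * (L1 (Y₁ ω) (X₂ ω) * L2 (X₁ ω) (X₂ ω)) + (-(2 * θ ^ 3) * (L1 (Y₂ ω) (X₁ ω) * L2 (X₁ ω) (X₂ ω))))) μ := by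
    exact (i8.const_mul _).add j9
  have j7 : Integrable (fun ω => 2 * θ ^ 2 * (ℓ (Y₁ ω) (Y₂ ω) * L2 (X₁ ω) (X₂ ω)) + (2 * θ ^ 2 * (L1 (Y₁ ω) (X₂ ω) * L1 (Y₂ ω) (X₁ ω)) + (-(2 * θ ^ 3) * (L1 (Y₁ ω) (X₂ ω) * L2 (X₁ ω) (X₂ ω)) + (-(2 * θ ^ 3) * (L1 (Y₂ ω) (X₁ ω) * L2 (X₁ ω) (X₂ ω)))))) μ := by
    exact (i7.const_mul _).add j8
  have j6 : Integrable (fun ω => -(2 * θ) * (ℓ (Y₁ ω) (Y₂ ω) * L1 (Y₂ ω) (X₁ ω)) + (2 * θ ^ 2 * (ℓ (Y₁ ω) (Y₂ ω) * L2 (X₁ ω) (X₂ ω)) + (2 * θ ^ 2 * (L1 (Y₁ ω) (X₂ ω) * L1 (Y₂ ω) (X₁ ω)) + (-(2 * θ ^ 3) * (L1 (Y₁ ω) (X₂ ω) * L2 (X₁ ω) (X₂ ω)) + (-(2 * θ ^ 3) * (L1 (Y₂ ω) (X₁ ω) * L2 (X₁ ω) (X₂ ω))))))) μ := by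
    exact (i6.const_mul _).add j7
  have j5 : Integrable (fun ω => -(2 * θ) * (ℓ (Y₁ ω) (Y₂ ω) * L1 (Y₁ ω) (X₂ ω)) + (-(2 * θ) * (ℓ (Y₁ ω) (Y₂ ω) * L1 (Y₂ ω) (X₁ ω)) + (2 * θ ^ 2 * (ℓ (Y₁ ω) (Y₂ ω) * L2 (X₁ ω) (X₂ ω)) + (2 * θ ^ 2 * (L1 (Y₁ ω) (X₂ ω) * L1 (Y₂ ω) (X₁ ω)) + (-(2 * θ ^ 3) * (L1 (Y₁ ω) (X₂ ω) * L2 (X₁ ω) (X₂ ω)) + (-(2 * θ ^ 3) * (L1 (Y₂ ω) (X₁ ω) * L2 (X₁ ω) (X₂ ω)))))))) μ := by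
    exact (i5.const_mul _).add j6
  have j4 : Integrable (fun ω => θ ^ 4 * (L2 (X₁ ω) (X₂ ω) * L2 (X₁ ω) (X₂ ω)) + (-(2 * θ) * (ℓ (Y₁ ω) (Y₂ ω) * L1 (Y₁ ω) (X₂ ω)) + (-(2 * θ) * (ℓ (Y₁ ω) (Y₂ ω) * L1 (Y₂ ω) (X₁ ω)) + (2 * θ ^ 2 * (ℓ (Y₁ ω) (Y₂ ω) * L2 (X₁ ω) (X₂ ω)) + (2 * θ ^ 2 * (L1 (Y₁ ω) (X₂ ω) * L1 (Y₂ ω) (X₁ ω)) + (-(2 * θ ^ 3) * (L1 (Y₁ ω) (X₂ ω) * L2 (X₁ ω) (X₂ ω)) + (-(2 * θ ^ 3) * (L1 (Y₂ ω) (X₁ ω) * L2 (X₁ ω) (X₂ ω))))))))) μ := by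
    exact (i4.const_mul _).add j5
  have j3 : Integrable (fun ω => θ * θ * (L1 (Y₂ ω) (X₁ ω) * L1 (Y₂ ω) (X₁ ω)) + (θ ^ 4 * (L2 (X₁ ω) (X₂ ω) * L2 (X₁ ω) (X₂ ω)) + (-(2 * θ) * (ℓ (Y₁ ω) (Y₂ ω) * L1 (Y₁ ω) (X₂ ω)) + (-(2 * θ) * (ℓ (Y₁ ω) (Y₂ ω) * L1 (Y₂ ω) (X₁ ω)) + (2 * θ ^ 2 * (ℓ (Y₁ ω) (Y₂ ω) * L2 (X₁ ω) (X₂ ω)) + (2 * θ ^ 2 * (L1 (Y₁ ω) (X₂ ω) * L1 (Y₂ ω) (X₁ ω)) + (-(2 * θ ^ 3) * (L1 (Y₁ ω) (X₂ ω) * L2 (X₁ ω) (X₂ ω)) + (-(2 * θ ^ 3) * (L1 (Y₂ ω) (X₁ ω) * L2 (X₁ ω) (X₂ ω)))))))))) μ := by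
    exact (i3.const_mul _).add j4
  have j2 : Integrable (fun ω => θ * θ * (L1 (Y₁ ω) (X₂ ω) * L1 (Y₁ ω) (X₂ ω)) + (θ * θ * (L1 (Y₂ ω) (X₁ ω) * L1 (Y₂ ω) (X₁ ω)) + (θ ^ 4 * (L2 (X₁ ω) (X₂ ω) * L2 (X₁ ω) (X₂ ω)) + (-(2 * θ) * (ℓ (Y₁ ω) (Y₂ ω) * L1 (Y₁ ω) (X₂ ω)) + (-(2 * θ) * (ℓ (Y₁ ω) (Y₂ ω) * L1 (Y₂ ω) (X₁ ω)) + (2 * θ ^ 2 * (ℓ (Y₁ ω) (Y₂ ω) * L2 (X₁ ω) (X₂ ω)) + (2 * θ ^ 2 * (L1 (Y₁ ω) (X₂ ω) * L1 (Y₂ ω) (X₁ ω)) + (-(2 * θ ^ 3) * (L1 (Y₁ ω) (X₂ ω) * L2 (X₁ ω) (X₂ ω)) + (-(2 * θ ^ 3) * (L1 (Y₂ ω) (X₁ ω) * L2 (X₁ ω) (X₂ ω))))))))))) μ := by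
    exact (i2.const_mul _).add j3
  have EA2 : ∫ ω, (ℓ (Y₁ ω) (Y₂ ω) - θ * L1 (Y₁ ω) (X₂ ω) - θ * L1 (Y₂ ω) (X₁ ω)
      + θ ^ 2 * L2 (X₁ ω) (X₂ ω)) ^ 2 ∂μ
      = (∫ ω, ℓ (Y₁ ω) (Y₂ ω) * ℓ (Y₁ ω) (Y₂ ω) ∂μ)
        + (2 * θ * θ - 4 * θ) * (∫ ω, L1 (Y₁ ω) (X₂ ω) * L1 (Y₁ ω) (X₂ ω) ∂μ)
        + (θ ^ 4 + 4 * θ ^ 2 - 4 * θ ^ 3) * ∫ ω, L2 (X₁ ω) (X₂ ω) * L2 (X₁ ω) (X₂ ω) ∂μ := by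
    rw [hE, integral_add i1 j2, integral_add (i2.const_mul _) j3,
      integral_add (i3.const_mul _) j4, integral_add (i4.const_mul _) j5,
      integral_add (i5.const_mul _) j6, integral_add (i6.const_mul _) j7,
      integral_add (i7.const_mul _) j8, integral_add (i8.const_mul _) j9,
      integral_add (i9.const_mul _) (i10.const_mul _),
      integral_const_mul _ _, integral_const_mul _ _, integral_const_mul _ _, integral_const_mul _ _,
      integral_const_mul _ _, integral_const_mul _ _, integral_const_mul _ _, integral_const_mul _ _,
      integral_const_mul _ _, k₄, k₅, k₆, k₇, k₈, k₉, k₁₀]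
    ring
  rw [variance_eq_sub hAmem, variance_eq_sub hℓ2, variance_eq_sub hA₁2, variance_eq_sub hB2]
  simp only [Pi.pow_apply]
  have sq1 : ∫ ω, ℓ (Y₁ ω) (Y₂ ω) ^ 2 ∂μ = ∫ ω, ℓ (Y₁ ω) (Y₂ ω) * ℓ (Y₁ ω) (Y₂ ω) ∂μ :=
    integral_congr_ae (Filter.Eventually.of_forall fun ω => pow_two _)
  have sq2 : ∫ ω, L1 (Y₁ ω) (X₂ ω) ^ 2 ∂μ
      = ∫ ω, L1 (Y₁ ω) (X₂ ω) * L1 (Y₁ ω) (X₂ ω) ∂μ :=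
    integral_congr_ae (Filter.Eventually.of_forall fun ω => pow_two _)
  have sq3 : ∫ ω, L2 (X₁ ω) (X₂ ω) ^ 2 ∂μ
      = ∫ ω, L2 (X₁ ω) (X₂ ω) * L2 (X₁ ω) (X₂ ω) ∂μ :=
    integral_congr_ae (Filter.Eventually.of_forall fun ω => pow_two _)
  rw [EA2, EA1, sq1, sq2, sq3, k₁, k₃]
  ring
end

section
/- Let Z₁, Z₂ be i.i.d. N(0,1), λ > 0, and ε ∈ (0, 1/2). Define S = (1 − ε/(1+λ))·Z₁ + (ε·√λ/(1+λ))·Z₂. Then S ~ N(0, v²) with v² = (1 − ε/(1+λ))² + ε²λ/(1+λ)² = ((1−ε)² + λ)/(1+λ), and there exists a constant c > 0 (uniform in ε ∈ (0,1/2) and λ ≥ 1) such that sup_{t} |P(S ≤ t) − Φ(t)| ≥ |Φ(1/v) − Φ(1)| ≥ c·ε/(1+λ). -/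
open MeasureTheory ProbabilityTheory Real Set

noncomputable def rotE (c s : ℝ) (h : c^2 + s^2 = 1) : (ℝ × ℝ) ≃ᵐ (ℝ × ℝ) where
  toFun := fun p => (c * p.1 + s * p.2, -s * p.1 + c * p.2)
  invFun := fun p => (c * p.1 - s * p.2, s * p.1 + c * p.2)
  left_inv := by
    intro p
    ext
    · simp only; linear_combination p.1 * h
    · simp only; linear_combination p.2 * h
  right_inv := by
    intro p
    ext
    · simp only; linear_combination p.1 * h
    · simp only; linear_combination p.2 * h
  measurable_toFun := by measurability
  measurable_invFun := by measurability

lemma rotE_mp (c s : ℝ) (h : c^2 + s^2 = 1) :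
    MeasurePreserving (rotE c s h) (volume : Measure (ℝ × ℝ)) volume := by
  refine ⟨(rotE c s h).measurable, ?_⟩
  have hL : (⇑(Matrix.toLin (Module.Basis.finTwoProd ℝ) (Module.Basis.finTwoProd ℝ) !![c, s; -s, c]) :
      ℝ × ℝ → ℝ × ℝ) = ⇑(rotE c s h) := by
    funext p
    simp [rotE, Matrix.toLin_finTwoProd_apply]
  have hdet : LinearMap.det
      (Matrix.toLin (Module.Basis.finTwoProd ℝ) (Module.Basis.finTwoProd ℝ) !![c, s; -s, c]) = 1 := by
    rw [LinearMap.det_toLin, Matrix.det_fin_two_of]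
    linear_combination h
  have := Measure.map_linearMap_addHaar_eq_smul_addHaar (μ := (volume : Measure (ℝ × ℝ)))
    (f := Matrix.toLin (Module.Basis.finTwoProd ℝ) (Module.Basis.finTwoProd ℝ) !![c, s; -s, c])
    (by rw [hdet]; norm_num)
  rw [hL, hdet] at this
  simpa using this

lemma gauss_prod_eq :
    (gaussianReal 0 1).prod (gaussianReal 0 1)
      = ((volume : Measure ℝ).prod volume).withDensity
          (fun p => gaussianPDF 0 1 p.1 * gaussianPDF 0 1 p.2) := by
  have h1 : gaussianReal 0 1 = volume.withDensity (gaussianPDF 0 1) :=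
    gaussianReal_of_var_ne_zero 0 one_ne_zero
  have hsf : SigmaFinite (volume.withDensity (gaussianPDF 0 1)) := by
    rw [← h1]; infer_instance
  rw [h1]
  refine Measure.prod_eq fun s t hs ht => ?_
  rw [withDensity_apply _ (hs.prod ht), ← Measure.prod_restrict,
    lintegral_prod_mul (measurable_gaussianPDF 0 1).aemeasurable
      (measurable_gaussianPDF 0 1).aemeasurable,
    withDensity_apply _ hs, withDensity_apply _ ht]

lemma gaussPDF_rot (c s : ℝ) (h : c^2 + s^2 = 1) (p : ℝ × ℝ) :
    gaussianPDF 0 1 (rotE c s h p).1 * gaussianPDF 0 1 (rotE c s h p).2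
      = gaussianPDF 0 1 p.1 * gaussianPDF 0 1 p.2 := by
  have key : ∀ x y : ℝ, gaussianPDFReal 0 1 x * gaussianPDFReal 0 1 y
      = (Real.sqrt (2 * π))⁻¹ * (Real.sqrt (2 * π))⁻¹ * rexp (-(x^2 + y^2) / 2) := by
    intro x y
    simp only [gaussianPDFReal, NNReal.coe_one, mul_one, sub_zero]
    rw [mul_mul_mul_comm, ← Real.exp_add]
    congr 1
    ring_nf
  rw [gaussianPDF_def]
  simp only
  rw [← ENNReal.ofReal_mul (gaussianPDFReal_nonneg _ _ _),
    ← ENNReal.ofReal_mul (gaussianPDFReal_nonneg _ _ _), key, key]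
  congr 2
  have : (rotE c s h p).1 ^ 2 + (rotE c s h p).2 ^ 2 = p.1 ^ 2 + p.2 ^ 2 := by
    simp only [rotE, MeasurableEquiv.coe_mk, Equiv.coe_fn_mk]
    linear_combination (p.1 ^ 2 + p.2 ^ 2) * h
  rw [this]

lemma rot_invariant (c s : ℝ) (h : c^2 + s^2 = 1) :
    Measure.map (rotE c s h) ((gaussianReal 0 1).prod (gaussianReal 0 1))
      = (gaussianReal 0 1).prod (gaussianReal 0 1) := by
  rw [gauss_prod_eq]
  ext u hu
  rw [Measure.map_apply (rotE c s h).measurable hu,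
    withDensity_apply _ ((rotE c s h).measurable hu),
    withDensity_apply _ hu]
  have mp : MeasurePreserving (rotE c s h) ((volume : Measure ℝ).prod volume)
      ((volume : Measure ℝ).prod volume) := by
    have := rotE_mp c s h
    rwa [Measure.volume_eq_prod] at this
  calc ∫⁻ p in (rotE c s h) ⁻¹' u, gaussianPDF 0 1 p.1 * gaussianPDF 0 1 p.2
        ∂((volume : Measure ℝ).prod volume)
      = ∫⁻ p in (rotE c s h) ⁻¹' u,
          gaussianPDF 0 1 ((rotE c s h) p).1 * gaussianPDF 0 1 ((rotE c s h) p).2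
        ∂((volume : Measure ℝ).prod volume) := by
        refine setLIntegral_congr_fun ((rotE c s h).measurable hu) (fun p _ => ?_)
        rw [gaussPDF_rot]
    _ = ∫⁻ p in u, gaussianPDF 0 1 p.1 * gaussianPDF 0 1 p.2
        ∂((volume : Measure ℝ).prod volume) :=
        mp.setLIntegral_comp_preimage_emb (rotE c s h).measurableEmbedding
          (fun q => gaussianPDF 0 1 q.1 * gaussianPDF 0 1 q.2) u

lemma map_lin_gauss (a b : ℝ) (hab : 0 < a ^ 2 + b ^ 2) :
    Measure.map (fun p : ℝ × ℝ => a * p.1 + b * p.2)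
        ((gaussianReal 0 1).prod (gaussianReal 0 1))
      = gaussianReal 0 (Real.toNNReal (a ^ 2 + b ^ 2)) := by
  set r := Real.sqrt (a ^ 2 + b ^ 2) with hr
  have hrpos : 0 < r := Real.sqrt_pos.mpr hab
  have hr2 : r ^ 2 = a ^ 2 + b ^ 2 := Real.sq_sqrt hab.le
  have hcs : (a / r) ^ 2 + (b / r) ^ 2 = 1 := by
    field_simp
    linarith [hr2]
  have key : (fun p : ℝ × ℝ => a * p.1 + b * p.2)
      = (fun x : ℝ => r * x) ∘ Prod.fst ∘ ⇑(rotE (a / r) (b / r) hcs) := by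
    funext p
    simp only [Function.comp_apply, rotE, MeasurableEquiv.coe_mk, Equiv.coe_fn_mk]
    field_simp
  rw [key, ← Measure.map_map (by fun_prop) (measurable_fst.comp (rotE _ _ hcs).measurable),
    ← Measure.map_map measurable_fst (rotE _ _ hcs).measurable, rot_invariant,
    Measure.map_fst_prod]
  simp only [measure_univ, one_smul]
  rw [show (fun x : ℝ => r * x) = (r * ·) from rfl, gaussianReal_map_const_mul]
  congr 1
  · ring
  · ext
    simp [hr2, Real.toNNReal, hab.le]

lemma gauss_scale_Iic (w : ℝ) (hw : 0 < w) :
    (gaussianReal 0 (Real.toNNReal w)) (Set.Iic 1)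
      = (gaussianReal 0 1) (Set.Iic (1 / Real.sqrt w)) := by
  have hs : 0 < Real.sqrt w := Real.sqrt_pos.mpr hw
  have hmap : (gaussianReal 0 1).map (Real.sqrt w * ·) = gaussianReal 0 (Real.toNNReal w) := by
    rw [gaussianReal_map_const_mul]
    congr 1
    · ring
    · ext
      simp [Real.sq_sqrt hw.le, Real.toNNReal, hw.le]
  rw [← hmap, Measure.map_apply (by fun_prop) measurableSet_Iic]
  congr 1
  ext x
  simp only [Set.mem_preimage, Set.mem_Iic]
  rw [mul_comm, ← le_div_iff₀ hs]

lemma gauss_cdf_gap (bb : ℝ) (hb1 : 1 ≤ bb) (hb2 : bb ≤ 2) :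
    ((gaussianReal 0 1) (Set.Iic bb)).toReal - ((gaussianReal 0 1) (Set.Iic 1)).toReal
      ≥ (Real.sqrt (2 * π))⁻¹ * Real.exp (-2) * (bb - 1) := by
  set K : ℝ := (Real.sqrt (2 * π))⁻¹ * Real.exp (-2) with hK
  have hKpos : 0 < K := by positivity
  have hsplit : (gaussianReal 0 1) (Set.Iic bb)
      = (gaussianReal 0 1) (Set.Iic 1) + (gaussianReal 0 1) (Set.Ioc 1 bb) := by
    rw [← measure_union (Set.Iic_disjoint_Ioc le_rfl) measurableSet_Ioc,
      Set.Iic_union_Ioc_eq_Iic hb1]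
  rw [hsplit, ENNReal.toReal_add (measure_ne_top _ _) (measure_ne_top _ _)]
  have hioc : ((gaussianReal 0 1) (Set.Ioc 1 bb)).toReal
      = ∫ x in Set.Ioc 1 bb, gaussianPDFReal 0 1 x := by
    rw [gaussianReal_apply_eq_integral 0 one_ne_zero, ENNReal.toReal_ofReal]
    exact setIntegral_nonneg measurableSet_Ioc fun x _ => gaussianPDFReal_nonneg _ _ _
  have hlower : ∫ x in Set.Ioc 1 bb, gaussianPDFReal 0 1 x ≥ ∫ _ in Set.Ioc 1 bb, K := by
    refine setIntegral_mono_on ((integrableOn_const_iff (C := K)).mpr (Or.inr ?_))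
      ((integrable_gaussianPDFReal 0 1).restrict) measurableSet_Ioc ?_
    · rw [Real.volume_Ioc]; exact ENNReal.ofReal_lt_top
    · intro x hx
      simp only [gaussianPDFReal, NNReal.coe_one, mul_one, sub_zero, hK]
      have h1 : 1 < x := hx.1
      have h2 : x ≤ bb := hx.2
      have hx4 : x ^ 2 ≤ 4 := by nlinarith
      have hexp : rexp (-2) ≤ rexp (-x ^ 2 / 2) := by
        rw [Real.exp_le_exp]; linarith
      exact mul_le_mul_of_nonneg_left hexp (by positivity)
  have hconst : ∫ _ in Set.Ioc 1 bb, K = K * (bb - 1) := by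
    rw [setIntegral_const, measureReal_def, Real.volume_Ioc, ENNReal.toReal_ofReal (by linarith), smul_eq_mul]
    ring
  rw [hconst] at hlower
  rw [hioc]
  linarith

lemma quant_branch (ε l : ℝ) (hε : 0 < ε) (hε2 : ε < 1 / 2) (hl : 1 ≤ l) :
    |((gaussianReal 0 1) (Set.Iic (1 / Real.sqrt (((1 - ε) ^ 2 + l) / (1 + l))))).toReal
        - ((gaussianReal 0 1) (Set.Iic 1)).toReal|
      ≥ (Real.sqrt (2 * π))⁻¹ * Real.exp (-2) / 2 * ε / (1 + l) := by
  have hl0 : (0:ℝ) < 1 + l := by linarith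
  set v2 : ℝ := ((1 - ε) ^ 2 + l) / (1 + l) with hv2'
  have hv2pos : 0 < v2 := by
    rw [hv2']; apply div_pos _ hl0; nlinarith
  have hv2lt1 : v2 < 1 := by
    rw [hv2', div_lt_one hl0]; nlinarith
  have hv2ge : 1 / 2 ≤ v2 := by
    rw [hv2', le_div_iff₀ hl0]; nlinarith
  clear_value v2
  set s : ℝ := Real.sqrt v2 with hsdef
  have hspos : 0 < s := Real.sqrt_pos.mpr hv2pos
  have hssq : s ^ 2 = v2 := Real.sq_sqrt hv2pos.le
  have hsle1 : s ≤ 1 := by nlinarith [Real.sqrt_nonneg v2]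
  have hsge : 1 / 2 ≤ s := by nlinarith [Real.sqrt_nonneg v2]
  clear_value s
  have hb1 : 1 ≤ 1 / s := one_le_one_div hspos hsle1
  have hb2 : 1 / s ≤ 2 := by rw [div_le_iff₀ hspos]; linarith
  have hgap : 1 / s - 1 ≥ ε / (2 * (1 + l)) := by
    have h1mv2 : 1 - v2 = (2 * ε - ε ^ 2) / (1 + l) := by
      rw [hv2']; field_simp; ring
    have h3 : ε / (1 + l) ≤ 1 - v2 := by
      rw [h1mv2]; gcongr; nlinarith
    have h4 : (1 - v2) / 2 ≤ 1 - s := by nlinarith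
    have h5 : 1 - s ≤ 1 / s - 1 := by
      have h : 1 / s - 1 = (1 - s) / s := by field_simp
      rw [h, le_div_iff₀ hspos]; nlinarith
    have h6 : ε / (2 * (1 + l)) = (ε / (1 + l)) / 2 := by rw [div_div, mul_comm]
    linarith
  have hΦgap := gauss_cdf_gap (1 / s) hb1 hb2
  have hKpos : 0 < (Real.sqrt (2 * π))⁻¹ * Real.exp (-2) := by positivity
  have habs := le_abs_self (((gaussianReal 0 1) (Set.Iic (1 / s))).toReal
    - ((gaussianReal 0 1) (Set.Iic 1)).toReal)
  have hfin : (Real.sqrt (2 * π))⁻¹ * Real.exp (-2) * (1 / s - 1)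
      ≥ (Real.sqrt (2 * π))⁻¹ * Real.exp (-2) / 2 * ε / (1 + l) := by
    have hmul := mul_le_mul_of_nonneg_left hgap hKpos.le
    have heq : (Real.sqrt (2 * π))⁻¹ * Real.exp (-2) / 2 * ε / (1 + l)
        = (Real.sqrt (2 * π))⁻¹ * Real.exp (-2) * (ε / (2 * (1 + l))) := by
      field_simp
    linarith
  linarith


/-- For `S = (1 − ε/(1+λ))Z₁ + (ε√λ/(1+λ))Z₂` with `Z₁, Z₂` i.i.d. standard normal:
`S ~ N(0, v²)` with `v² = (1−ε/(1+λ))² + ε²λ/(1+λ)² = ((1−ε)²+λ)/(1+λ)`, and there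
is a constant `c > 0` uniform in `ε ∈ (0,1/2)`, `λ ≥ 1` such that
`sup_t |P(S ≤ t) − Φ(t)| ≥ |Φ(1/v) − Φ(1)| ≥ c·ε/(1+λ)`. -/
theorem stmt_17 :
    ∃ c : ℝ, 0 < c ∧
      ∀ (Ω : Type) (_ : MeasurableSpace Ω) (μ : Measure Ω),
        IsProbabilityMeasure μ →
        ∀ (Z₁ Z₂ : Ω → ℝ), Measurable Z₁ → Measurable Z₂ →
          IndepFun Z₁ Z₂ μ →
          Measure.map Z₁ μ = gaussianReal 0 1 →
          Measure.map Z₂ μ = gaussianReal 0 1 →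
          ∀ (ε l : ℝ), 0 < ε → ε < 1 / 2 → 1 ≤ l →
            let v2 : ℝ := ((1 - ε) ^ 2 + l) / (1 + l)
            let S : Ω → ℝ := fun ω =>
              (1 - ε / (1 + l)) * Z₁ ω + (ε * Real.sqrt l / (1 + l)) * Z₂ ω
            let Φ : ℝ → ℝ := fun x => ((gaussianReal 0 1) (Set.Iic x)).toReal
            ((1 - ε / (1 + l)) ^ 2 + ε ^ 2 * l / (1 + l) ^ 2 = v2) ∧
            Measure.map S μ = gaussianReal 0 (Real.toNNReal v2) ∧
            (⨆ t : ℝ, |(μ {ω | S ω ≤ t}).toReal - Φ t|) ≥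
              |Φ (1 / Real.sqrt v2) - Φ 1| ∧
            |Φ (1 / Real.sqrt v2) - Φ 1| ≥ c * ε / (1 + l) := by
  refine ⟨(Real.sqrt (2 * π))⁻¹ * Real.exp (-2) / 2, by positivity, ?_⟩
  intro Ω mΩ μ hμ Z₁ Z₂ hZ₁ hZ₂ hindep hmap1 hmap2 ε l hε hε2 hl
  intro v2 S Φ
  set a : ℝ := 1 - ε / (1 + l) with ha
  set b : ℝ := ε * Real.sqrt l / (1 + l) with hb
  have hl0 : (0:ℝ) < 1 + l := by linarith
  have hl0' : (0:ℝ) ≤ l := by linarith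
  have hv2def : v2 = ((1 - ε) ^ 2 + l) / (1 + l) := rfl
  have h1 : a ^ 2 + ε ^ 2 * l / (1 + l) ^ 2 = v2 := by
    rw [hv2def, ha]
    field_simp
    ring
  have hbsq : b ^ 2 = ε ^ 2 * l / (1 + l) ^ 2 := by
    rw [hb, div_pow, mul_pow, Real.sq_sqrt hl0']
  have hab : a ^ 2 + b ^ 2 = v2 := by rw [hbsq]; exact h1
  have hv2pos : 0 < v2 := by
    rw [hv2def]
    apply div_pos _ hl0
    nlinarith
  -- the law of S
  have hjoint : μ.map (fun ω => (Z₁ ω, Z₂ ω)) = (gaussianReal 0 1).prod (gaussianReal 0 1) := by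
    rw [(indepFun_iff_map_prod_eq_prod_map_map hZ₁.aemeasurable hZ₂.aemeasurable).mp hindep,
      hmap1, hmap2]
  have hS : Measure.map S μ = gaussianReal 0 (Real.toNNReal v2) := by
    have hcomp : S = (fun p : ℝ × ℝ => a * p.1 + b * p.2) ∘ (fun ω => (Z₁ ω, Z₂ ω)) := rfl
    rw [hcomp, ← Measure.map_map (by fun_prop) (by fun_prop), hjoint,
      map_lin_gauss a b (by rw [hab]; exact hv2pos), hab]
  refine ⟨h1, hS, ?_, ?_⟩
  -- sup bound
  · have hSmeas : Measurable S := by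
      rw [show S = fun ω => a * Z₁ ω + b * Z₂ ω from rfl]
      fun_prop
    have hterm : |(μ {ω | S ω ≤ (1:ℝ)}).toReal - Φ 1| = |Φ (1 / Real.sqrt v2) - Φ 1| := by
      have h' : μ {ω | S ω ≤ (1:ℝ)} = (Measure.map S μ) (Set.Iic 1) := by
        rw [Measure.map_apply hSmeas measurableSet_Iic]; rfl
      rw [h', hS, gauss_scale_Iic v2 hv2pos]
    have hbdd : BddAbove (Set.range fun t => |(μ {ω | S ω ≤ t}).toReal - Φ t|) := by
      refine ⟨2, ?_⟩
      rintro x ⟨t, rfl⟩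
      have hA : (μ {ω | S ω ≤ t}).toReal ≤ 1 := by
        have := ENNReal.toReal_mono (measure_ne_top μ Set.univ)
          (measure_mono (Set.subset_univ {ω | S ω ≤ t}))
        simpa using this
      have hB : Φ t ≤ 1 := by
        have := ENNReal.toReal_mono (measure_ne_top (gaussianReal 0 1) Set.univ)
          (measure_mono (Set.subset_univ (Set.Iic t)))
        simpa using this
      have hA0 : 0 ≤ (μ {ω | S ω ≤ t}).toReal := ENNReal.toReal_nonneg
      have hB0 : 0 ≤ Φ t := ENNReal.toReal_nonneg
      rw [abs_le]
      constructor <;> linarith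
    have := le_ciSup hbdd (1:ℝ)
    rw [hterm] at this
    exact this
  -- quantitative bound
  · exact quant_branch ε l hε hε2 hl
end
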